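/- Let C ∈ ℝ be an arbitrary clipping constant. Let d, k ≥ 1, let W, W' : Fin k → ℝ^d and b, b' : Fin k → ℝ with W' j = W j and b' j = b j for all j ≠ g. Define z_j(x) = min(⟪x, W j⟫ + b j, C), h(x) = max_{j ∈ Fin k} z_j(x), and z'_j, h' the same with (W', b'). If x ∈ ℝ^d satisfies z_i(x) = C for some i ≠ g, then h'(x) = h(x). -/
import Mathlib


open RealInnerProductSpace

/-- Maxout unit clipped at constant `C`:
`h(x) = max_j min(⟪x, W j⟫ + b j, C)`. -/
noncomputable def clippedMaxoutC {d k : ℕ} (C : ℝ) (hk : 1 ≤ k)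
    (W : Fin k → EuclideanSpace ℝ (Fin d)) (b : Fin k → ℝ)
    (x : EuclideanSpace ℝ (Fin d)) : ℝ :=
  Finset.univ.sup' (Finset.univ_nonempty_iff.mpr ⟨⟨0, hk⟩⟩)
    fun j => min (⟪x, W j⟫ + b j) C

theorem clippedMaxoutC_update_no_interference
    (C : ℝ) {d k : ℕ} (hd : 1 ≤ d) (hk : 1 ≤ k)
    (W W' : Fin k → EuclideanSpace ℝ (Fin d)) (b b' : Fin k → ℝ) (g : Fin k)
    (hW : ∀ j, j ≠ g → W' j = W j) (hb : ∀ j, j ≠ g → b' j = b j)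
    (x : EuclideanSpace ℝ (Fin d)) (i : Fin k) (hig : i ≠ g)
    (hzi : min (⟪x, W i⟫ + b i) C = C) :
    clippedMaxoutC C hk W' b' x = clippedMaxoutC C hk W b x := by
  have key : ∀ (V : Fin k → EuclideanSpace ℝ (Fin d)) (c : Fin k → ℝ),
      min (⟪x, V i⟫ + c i) C = C → clippedMaxoutC C hk V c x = C := by
    intro V c h
    unfold clippedMaxoutC
    refine le_antisymm ?_ ?_
    · exact Finset.sup'_le _ _ fun j _ => min_le_right _ _
    · calc C = min (⟪x, V i⟫ + c i) C := h.symm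
        _ ≤ _ := Finset.le_sup' (f := fun j => min (⟪x, V j⟫ + c j) C) (Finset.mem_univ i)
  rw [key W b hzi, key W' b' (by rw [hW i hig, hb i hig]; exact hzi)]
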